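/- Let A and B be one-dimensional subspaces of a finite-dimensional real inner product space. Then dist'(A,B) ≤ √2 · dist(A,B)^{1/2}. -/

import Mathlib

open Module Submodule

/-- Comparison of the two subspace distances for one-dimensional subspaces
(Appendix A of the paper): dist'(A,B) ≤ √2 · dist(A,B)^{1/2}. -/
theorem dist'_le_sqrt_two_mul_sqrt_dist
    {E : Type*} [NormedAddCommGroup E] [InnerProductSpace ℝ E] [FiniteDimensional ℝ E]
    (A B : Submodule ℝ E) (hA : Module.finrank ℝ A = 1) (hB : Module.finrank ℝ B = 1) :
    sInf {r : ℝ | ∃ u ∈ A, ∃ v ∈ B, ‖u‖ = 1 ∧ ‖v‖ = 1 ∧ r = ‖u - v‖} ≤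
      Real.sqrt 2 *
        Real.sqrt ‖A.subtypeL.comp A.orthogonalProjectionOnto -
            B.subtypeL.comp B.orthogonalProjectionOnto‖ := by
  -- get unit vectors
  obtain ⟨x, hxA, hx0⟩ := exists_mem_ne_zero_of_rank_pos (s := A)
    (by rw [rank_eq_one_iff_finrank_eq_one.mpr hA]; norm_num)
  obtain ⟨y, hyB, hy0⟩ := exists_mem_ne_zero_of_rank_pos (s := B)
    (by rw [rank_eq_one_iff_finrank_eq_one.mpr hB]; norm_num)
  set a : E := ‖x‖⁻¹ • x with ha_def
  have haA : a ∈ A := A.smul_mem _ hxA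
  have ha1 : ‖a‖ = 1 := norm_smul_inv_norm hx0
  set b0 : E := ‖y‖⁻¹ • y with hb0_def
  have hb0B : b0 ∈ B := B.smul_mem _ hyB
  have hb01 : ‖b0‖ = 1 := norm_smul_inv_norm hy0
  set b : E := if 0 ≤ (inner ℝ a b0 : ℝ) then b0 else -b0 with hb_def
  have hbB : b ∈ B := by rw [hb_def]; split <;> [exact hb0B; exact B.neg_mem hb0B]
  have hb1 : ‖b‖ = 1 := by rw [hb_def]; split <;> simp [hb01]
  set t : ℝ := inner ℝ a b with ht_def
  have ht0 : 0 ≤ t := by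
    rw [ht_def, hb_def]; split_ifs with h
    · exact h
    · rw [inner_neg_right]; linarith [not_le.mp h]
  have ht1 : t ≤ 1 := by
    calc t ≤ ‖a‖ * ‖b‖ := real_inner_le_norm a b
    _ = 1 := by rw [ha1, hb1]; ring
  -- A and B are spans
  have hb0' : b ≠ 0 := fun h => by simp [h] at hb1
  have ha0' : a ≠ 0 := fun h => by simp [h] at ha1
  have hAspan : A = ℝ ∙ a := ((Submodule.eq_of_le_of_finrank_le
      ((span_le).mpr (by simpa using haA))
      (by rw [hA, finrank_span_singleton ha0'])).symm)
  have hBspan : B = ℝ ∙ b := ((Submodule.eq_of_le_of_finrank_le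
      ((span_le).mpr (by simpa using hbB))
      (by rw [hB, finrank_span_singleton hb0'])).symm)
  set D := A.subtypeL.comp A.orthogonalProjectionOnto -
      B.subtypeL.comp B.orthogonalProjectionOnto with hD_def
  have hDa : D a = a - t • b := by
    have h1 : ((A.orthogonalProjectionOnto a : E)) = a := by
      exact Submodule.starProjection_eq_self_iff.mpr haA
    have h2 : ((B.orthogonalProjectionOnto a : E)) = t • b := by
      rw [hBspan]
      change (ℝ ∙ b).starProjection a = _
      rw [Submodule.starProjection_singleton]
      rw [ht_def, real_inner_comm, hb1]
      norm_num
    simp [hD_def, h1, h2]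
  have hDa_norm : ‖D a‖ = Real.sqrt (1 - t ^ 2) := by
    rw [← Real.sqrt_sq (norm_nonneg (D a)), hDa]
    congr 1
    rw [norm_sub_sq_real, ha1, real_inner_smul_right, norm_smul, hb1, ← ht_def]
    simp [abs_of_nonneg ht0]
    ring
  have hab_norm : ‖a - b‖ = Real.sqrt (2 - 2 * t) := by
    rw [← Real.sqrt_sq (norm_nonneg (a - b))]
    congr 1
    rw [norm_sub_sq_real, ha1, hb1, ← ht_def]
    ring
  have hDnorm : Real.sqrt (1 - t ^ 2) ≤ ‖D‖ := by
    calc Real.sqrt (1 - t ^ 2) = ‖D a‖ := hDa_norm.symm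
    _ ≤ ‖D‖ * ‖a‖ := D.le_opNorm a
    _ = ‖D‖ := by rw [ha1]; ring
  have key : ‖a - b‖ ≤ Real.sqrt 2 * Real.sqrt ‖D‖ := by
    rw [hab_norm, ← Real.sqrt_mul (by norm_num : (0:ℝ) ≤ 2)]
    apply Real.sqrt_le_sqrt
    have h1t : 1 - t ≤ Real.sqrt (1 - t ^ 2) := by
      rw [show 1 - t ^ 2 = (1 - t) * (1 + t) by ring]
      nlinarith [Real.sq_sqrt (by nlinarith : (0:ℝ) ≤ (1 - t) * (1 + t)),
        Real.sqrt_nonneg ((1 - t) * (1 + t))]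
    linarith
  refine le_trans (csInf_le ⟨0, ?_⟩ ⟨a, haA, b, hbB, ha1, hb1, rfl⟩) key
  rintro r ⟨u, -, v, -, -, -, rfl⟩
  exact norm_nonneg _
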